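/- There is an isomorphism of rings between the endomorphism ring End_{Frob_R}(P) of the Frobenius module P in the category Frob_R and the opposite ring R[F]ᵒᵖ of the twisted polynomial ring R[F]. -/

import Mathlib

/-!
STATEMENT 5: For a commutative ring `R` of prime characteristic `p`, there is an
isomorphism of rings between the endomorphism ring `End_{Frob_R}(P)` of the Frobenius
module `P = ⨁_{n ∈ ℕ} R` (with `κ_P (r · eₙ) = r ^ p · e_{n+1}`) and the opposite
ring `R[F]ᵒᵖ` of the twisted polynomial ring `R[F]`.
-/

open CategoryTheory

set_option linter.unusedSectionVars false

universe u

variable (p : ℕ) (R : Type u) [CommRing R] [Fact p.Prime] [CharP R p]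

/-- A Frobenius module over `R`: an `R`-module `M` together with an additive map
`κ : M → M` that is semilinear along the Frobenius, i.e. `κ (r • m) = r ^ p • κ m`. -/
structure FrobModule where
  /-- the underlying type -/
  carrier : Type u
  [isAddCommGroup : AddCommGroup carrier]
  [isModule : Module R carrier]
  /-- the Frobenius-semilinear structure map -/
  κ : carrier →+ carrier
  κ_smul : ∀ (r : R) (m : carrier), κ (r • m) = r ^ p • κ m

attribute [instance] FrobModule.isAddCommGroup FrobModule.isModule

namespace FrobModule

variable {p R}

/-- Morphisms of Frobenius modules: `R`-linear maps commuting with the structure maps. -/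
@[ext]
structure Hom (M N : FrobModule p R) where
  /-- the underlying `R`-linear map -/
  toLinearMap : M.carrier →ₗ[R] N.carrier
  comm : ∀ m, toLinearMap (M.κ m) = N.κ (toLinearMap m)

instance : Category (FrobModule p R) where
  Hom M N := Hom M N
  id M := ⟨LinearMap.id, fun _ => rfl⟩
  comp f g := ⟨g.toLinearMap.comp f.toLinearMap, fun m => by
    simp only [LinearMap.comp_apply, f.comm, g.comm]⟩
  id_comp f := by apply Hom.ext; rfl
  comp_id f := by apply Hom.ext; rfl
  assoc f g h := by apply Hom.ext; rfl

section HomGroup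

variable {M N : FrobModule p R}

instance : Zero (M ⟶ N) :=
  ⟨⟨0, fun m => by simp⟩⟩

instance : Add (M ⟶ N) :=
  ⟨fun f g => ⟨f.toLinearMap + g.toLinearMap, fun m => by
    simp [f.comm, g.comm]⟩⟩

instance : Neg (M ⟶ N) :=
  ⟨fun f => ⟨-f.toLinearMap, fun m => by simp [f.comm]⟩⟩

instance : Sub (M ⟶ N) :=
  ⟨fun f g => ⟨f.toLinearMap - g.toLinearMap, fun m => by
    simp [f.comm, g.comm]⟩⟩

instance : SMul ℕ (M ⟶ N) :=
  ⟨fun n f => ⟨n • f.toLinearMap, fun m => by simp [f.comm]⟩⟩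

instance : SMul ℤ (M ⟶ N) :=
  ⟨fun n f => ⟨n • f.toLinearMap, fun m => by simp [f.comm]⟩⟩

/-- The abelian group structure on morphisms of Frobenius modules. -/
instance : AddCommGroup (M ⟶ N) :=
  Function.Injective.addCommGroup (fun f : M ⟶ N => f.toLinearMap)
    (fun _ _ h => Hom.ext h) rfl (fun _ _ => rfl) (fun _ => rfl) (fun _ _ => rfl)
    (fun _ _ => rfl) (fun _ _ => rfl)

/-- Composition of morphisms of Frobenius modules is bilinear. -/
instance : Preadditive (FrobModule p R) where
  add_comp M N K f f' g := by
    apply Hom.ext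
    show g.toLinearMap.comp (f.toLinearMap + f'.toLinearMap)
      = g.toLinearMap.comp f.toLinearMap + g.toLinearMap.comp f'.toLinearMap
    rw [LinearMap.comp_add]
  comp_add M N K f g g' := by
    apply Hom.ext
    show (g.toLinearMap + g'.toLinearMap).comp f.toLinearMap
      = g.toLinearMap.comp f.toLinearMap + g'.toLinearMap.comp f.toLinearMap
    rw [LinearMap.add_comp]

end HomGroup

end FrobModule

/-- The structure map of the Frobenius module `P`, determined by
`r · eₙ ↦ r ^ p · e_{n+1}`. -/
noncomputable def Pκ : (ℕ →₀ R) →+ (ℕ →₀ R) where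
  toFun m := Finsupp.mapDomain Nat.succ
    (Finsupp.mapRange (frobenius R p) (map_zero _) m)
  map_zero' := by simp
  map_add' a b := by
    show Finsupp.mapDomain Nat.succ _ = _
    rw [Finsupp.mapRange_add (fun x y => map_add _ x y), Finsupp.mapDomain_add]

/-- The Frobenius module `P` with underlying module `⨁_{n ∈ ℕ} R` and structure map
`κ_P (r · eₙ) = r ^ p · e_{n+1}`. -/
noncomputable def P : FrobModule p R where
  carrier := ℕ →₀ R
  κ := Pκ p R
  κ_smul r m := by
    have h1 : Finsupp.mapRange (frobenius R p) (map_zero _) (r • m)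
        = r ^ p • Finsupp.mapRange (frobenius R p) (map_zero _) m := by
      ext n
      simp [Finsupp.mapRange_apply, frobenius_def, mul_pow]
    show Finsupp.mapDomain Nat.succ _ = r ^ p • Finsupp.mapDomain Nat.succ _
    rw [h1, Finsupp.mapDomain_smul]


/-- The underlying additive group of the twisted polynomial ring `R[F]`:
finitely supported functions `ℕ →₀ R` (formal sums `∑ aₙ Fⁿ`). -/
def TwistedPoly (p : ℕ) (R : Type u) [CommRing R] [Fact p.Prime] [CharP R p] : Type u :=
  ℕ →₀ R

namespace TwistedPoly

variable (p : ℕ) (R : Type u) [CommRing R] [Fact p.Prime] [CharP R p]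

noncomputable instance : AddCommGroup (TwistedPoly p R) :=
  inferInstanceAs (AddCommGroup (ℕ →₀ R))

/-- The element `a Fⁿ` of `R[F]`. -/
noncomputable def single (n : ℕ) (a : R) : TwistedPoly p R := Finsupp.single n a

/-- The twisted convolution product on `ℕ →₀ R`, determined by
`(a Fᵐ) · (b Fⁿ) = (a * b ^ (p ^ m)) F^(m + n)`. -/
noncomputable def mulAux (f g : ℕ →₀ R) : ℕ →₀ R :=
  f.sum fun m a => g.sum fun n b => Finsupp.single (m + n) (a * (frobenius R p)^[m] b)

theorem mulAux_zero_left (g : ℕ →₀ R) : mulAux p R 0 g = 0 := by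
  simp [mulAux]

theorem mulAux_zero_right (f : ℕ →₀ R) : mulAux p R f 0 = 0 := by
  simp [mulAux]

theorem mulAux_add_left (f₁ f₂ g : ℕ →₀ R) :
    mulAux p R (f₁ + f₂) g = mulAux p R f₁ g + mulAux p R f₂ g := by
  classical
  refine Finsupp.sum_add_index' (fun m => ?_) (fun m a₁ a₂ => ?_)
  · simp
  · rw [← Finsupp.sum_add]
    refine Finsupp.sum_congr fun n _ => ?_
    rw [add_mul, Finsupp.single_add]

theorem mulAux_add_right (f g₁ g₂ : ℕ →₀ R) :
    mulAux p R f (g₁ + g₂) = mulAux p R f g₁ + mulAux p R f g₂ := by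
  classical
  unfold mulAux
  rw [← Finsupp.sum_add]
  refine Finsupp.sum_congr fun m _ => ?_
  refine Finsupp.sum_add_index' (fun n => ?_) (fun n b₁ b₂ => ?_)
  · simp
  · rw [iterate_map_add, mul_add, Finsupp.single_add]

theorem mulAux_single_single (m n : ℕ) (a b : R) :
    mulAux p R (Finsupp.single m a) (Finsupp.single n b)
      = Finsupp.single (m + n) (a * (frobenius R p)^[m] b) := by
  classical
  unfold mulAux
  rw [Finsupp.sum_single_index (by simp), Finsupp.sum_single_index (by simp [iterate_map_zero])]

theorem mulAux_assoc (f g h : ℕ →₀ R) :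
    mulAux p R (mulAux p R f g) h = mulAux p R f (mulAux p R g h) := by
  classical
  induction f using Finsupp.induction_linear with
  | zero => simp [mulAux_zero_left]
  | add f₁ f₂ ih₁ ih₂ => simp [mulAux_add_left, ih₁, ih₂]
  | single m a =>
    induction g using Finsupp.induction_linear with
    | zero => simp [mulAux_zero_left, mulAux_zero_right]
    | add g₁ g₂ ih₁ ih₂ => simp [mulAux_add_left, mulAux_add_right, ih₁, ih₂]
    | single n b =>
      induction h using Finsupp.induction_linear with
      | zero => simp [mulAux_zero_right]
      | add h₁ h₂ ih₁ ih₂ => simp [mulAux_add_right, ih₁, ih₂]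
      | single k c =>
        rw [mulAux_single_single, mulAux_single_single, mulAux_single_single,
          mulAux_single_single, add_assoc, mul_assoc, iterate_map_mul,
          ← Function.iterate_add_apply]

theorem mulAux_one_left (f : ℕ →₀ R) : mulAux p R (Finsupp.single 0 1) f = f := by
  classical
  induction f using Finsupp.induction_linear with
  | zero => simp [mulAux_zero_right]
  | add f₁ f₂ ih₁ ih₂ => rw [mulAux_add_right, ih₁, ih₂]
  | single n b => rw [mulAux_single_single]; simp

theorem mulAux_one_right (f : ℕ →₀ R) : mulAux p R f (Finsupp.single 0 1) = f := by
  classical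
  induction f using Finsupp.induction_linear with
  | zero => simp [mulAux_zero_left]
  | add f₁ f₂ ih₁ ih₂ => rw [mulAux_add_left, ih₁, ih₂]
  | single n b => rw [mulAux_single_single]; simp [iterate_map_one]

/-- The ring structure on the twisted polynomial ring `R[F]`: the underlying additive
group is `ℕ →₀ R`, the unit is `F⁰ = 1`, and the multiplication is determined by
`(a Fᵐ) · (b Fⁿ) = (a * b ^ (p ^ m)) F^(m + n)`. -/
noncomputable instance : Ring (TwistedPoly p R) :=
  { (inferInstanceAs (AddCommGroup (TwistedPoly p R)) : AddCommGroup (TwistedPoly p R)) with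
    mul := fun f g => mulAux p R f g
    one := (Finsupp.single 0 1 : ℕ →₀ R)
    left_distrib := fun f g h => mulAux_add_right p R f g h
    right_distrib := fun f g h => mulAux_add_left p R f g h
    zero_mul := fun f => mulAux_zero_left p R f
    mul_zero := fun f => mulAux_zero_right p R f
    mul_assoc := fun f g h => mulAux_assoc p R f g h
    one_mul := fun f => mulAux_one_left p R f
    mul_one := fun f => mulAux_one_right p R f }

@[simp] theorem single_mul_single (m n : ℕ) (a b : R) :
    (single p R m a) * (single p R n b) = single p R (m + n) (a * b ^ p ^ m) := by
  show mulAux p R (Finsupp.single m a) (Finsupp.single n b)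
    = (Finsupp.single (m + n) (a * b ^ p ^ m) : ℕ →₀ R)
  rw [mulAux_single_single, iterate_frobenius]

/-- The canonical ring homomorphism `R →+* R[F]`, `a ↦ a F⁰`. -/
noncomputable def C : R →+* TwistedPoly p R where
  toFun a := single p R 0 a
  map_one' := rfl
  map_mul' a b := by
    rw [single_mul_single]
    simp
  map_zero' := by
    show (Finsupp.single 0 (0 : R) : ℕ →₀ R) = 0
    simp
  map_add' a b := by
    show (Finsupp.single 0 (a + b) : ℕ →₀ R) = Finsupp.single 0 a + Finsupp.single 0 b
    exact Finsupp.single_add 0 a b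

end TwistedPoly

variable (p : ℕ) (R : Type u) [CommRing R] [Fact p.Prime] [CharP R p]


namespace EndPAux

open TwistedPoly

theorem Pκ_single (n : ℕ) (b : R) :
    Pκ p R (Finsupp.single n b) = Finsupp.single (n + 1) (frobenius R p b) := by
  show Finsupp.mapDomain Nat.succ (Finsupp.mapRange (frobenius R p) (map_zero _)
      (Finsupp.single n b)) = _
  rw [Finsupp.mapRange_single, Finsupp.mapDomain_single]

theorem mulAux_smul_left (r : R) (f g : ℕ →₀ R) :
    mulAux p R (r • f) g = r • mulAux p R f g := by
  classical
  induction f using Finsupp.induction_linear with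
  | zero => simp [mulAux_zero_left]
  | add f₁ f₂ ih₁ ih₂ => rw [smul_add, mulAux_add_left, ih₁, ih₂, mulAux_add_left, smul_add]
  | single m a =>
    rw [Finsupp.smul_single, smul_eq_mul]
    unfold mulAux
    rw [Finsupp.sum_single_index (by simp), Finsupp.sum_single_index (by simp),
      Finsupp.smul_sum]
    refine Finsupp.sum_congr fun n b => ?_
    rw [Finsupp.smul_single, smul_eq_mul, mul_assoc]

theorem Pκ_mulAux (x a : ℕ →₀ R) :
    Pκ p R (mulAux p R x a) = mulAux p R (Pκ p R x) a := by
  classical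
  induction x using Finsupp.induction_linear with
  | zero => simp [mulAux_zero_left]
  | add f₁ f₂ ih₁ ih₂ => rw [mulAux_add_left, map_add, ih₁, ih₂, map_add, mulAux_add_left]
  | single m b =>
    rw [Pκ_single]
    unfold mulAux
    rw [Finsupp.sum_single_index (by simp), Finsupp.sum_single_index (by simp),
      map_finsuppSum]
    refine Finsupp.sum_congr fun n c => ?_
    rw [Pκ_single, map_mul, ← Function.iterate_succ_apply' (frobenius R p)]
    have : m + n + 1 = m + 1 + n := by omega
    rw [this]

theorem mulAux_single_one (n : ℕ) (a : ℕ →₀ R) :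
    mulAux p R (Finsupp.single n 1) a = (Pκ p R)^[n] a := by
  induction n with
  | zero => exact mulAux_one_left p R a
  | succ n ih =>
    have h : (Finsupp.single (n + 1) (1 : R)) = Pκ p R (Finsupp.single n 1) := by
      rw [Pκ_single, map_one]
    rw [h, ← Pκ_mulAux, ih, Function.iterate_succ_apply']

theorem Pκ_iterate_single_one (n : ℕ) :
    (Pκ p R)^[n] (Finsupp.single 0 (1 : R)) = Finsupp.single n 1 := by
  induction n with
  | zero => rfl
  | succ n ih => rw [Function.iterate_succ_apply', ih, Pκ_single, map_one]

/-- The endomorphism of `P` given by right twisted multiplication by `a`. -/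
noncomputable def T (a : ℕ →₀ R) : P p R ⟶ P p R where
  toLinearMap :=
    { toFun := fun x => mulAux p R x a
      map_add' := fun x y => mulAux_add_left p R x y a
      map_smul' := fun r x => mulAux_smul_left p R r x a }
  comm := fun x => (Pκ_mulAux p R x a).symm

theorem endo_eq (f : CategoryTheory.End (P p R)) (x : ℕ →₀ R) :
    f.toLinearMap x = mulAux p R x (f.toLinearMap (Finsupp.single 0 1)) := by
  classical
  have hiter : ∀ (n : ℕ) (y : ℕ →₀ R),
      f.toLinearMap ((Pκ p R)^[n] y) = (Pκ p R)^[n] (f.toLinearMap y) := by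
    intro n
    induction n with
    | zero => intro y; rfl
    | succ n ih =>
      intro y
      refine (congrArg f.toLinearMap (Function.iterate_succ_apply' (Pκ p R) n y)).trans
        (Eq.trans ?_ (Function.iterate_succ_apply' (Pκ p R) n (f.toLinearMap y)).symm)
      exact (f.comm _).trans (congrArg (Pκ p R) (ih y))
  induction x using Finsupp.induction_linear with
  | zero => erw [map_zero, mulAux_zero_left]; rfl
  | add f₁ f₂ ih₁ ih₂ => erw [map_add, ih₁, ih₂]; exact (mulAux_add_left p R f₁ f₂ _).symm
  | single n b =>
    have h2 : (Finsupp.single n b : ℕ →₀ R) = b • Finsupp.single n 1 := by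
      rw [Finsupp.smul_single, smul_eq_mul, mul_one]
    erw [h2, map_smul]
    refine (congrArg (b • ·) ?_).trans (mulAux_smul_left p R b _ _).symm
    exact (congrArg f.toLinearMap (Pκ_iterate_single_one p R n).symm).trans
      ((hiter n _).trans (mulAux_single_one p R n _).symm)

/-- The underlying map of the isomorphism. -/
noncomputable def phi (f : CategoryTheory.End (P p R)) : (TwistedPoly p R)ᵐᵒᵖ :=
  MulOpposite.op (f.toLinearMap (Finsupp.single 0 1) : TwistedPoly p R)

end EndPAux

/-- The endomorphism ring of the Frobenius module `P` in `Frob_R` is isomorphic, as a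
ring, to the opposite ring of the twisted polynomial ring `R[F]`. -/
theorem end_P_iso_twistedPoly_op :
    Nonempty (CategoryTheory.End (P p R) ≃+* (TwistedPoly p R)ᵐᵒᵖ) := by
  classical
  refine ⟨{
    toFun := EndPAux.phi p R
    invFun := fun a => EndPAux.T p R (MulOpposite.unop a)
    left_inv := fun f => by
      apply FrobModule.Hom.ext
      apply LinearMap.ext
      intro x
      exact (EndPAux.endo_eq p R f x).symm
    right_inv := fun a => by
      show MulOpposite.op (TwistedPoly.mulAux p R (Finsupp.single 0 1) (MulOpposite.unop a)) = a
      rw [TwistedPoly.mulAux_one_left]; rfl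
    map_mul' := fun f g => by
      unfold EndPAux.phi
      erw [← MulOpposite.op_mul]
      exact congrArg MulOpposite.op
        (EndPAux.endo_eq p R f (g.toLinearMap (Finsupp.single 0 1)))
    map_add' := fun f g => rfl }⟩
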